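/- Under the hypotheses of the jump-angle lemma (μ(t) the perturbed co-normal with derivative ((I−τ⊗τ)∂X − ∂X^⊤)μ at t=0, and the projected averaged normal P^⊥_{τ(t)}(n̄) with value n̄ at t = 0 satisfying n̄·τ = 0, ‖n̄‖ = 1, |μ·n̄| < 1), the derivative of the angle satisfies d/dt arccos(μ(t) · P^⊥_{τ(t)}(n̄)) |_{t=0} = −((∂X − ∂X^⊤)μ · n̄) / √(1 − (μ·n̄)²). In particular, only the skew-symmetric part of ∂X contributes. -/

import Mathlib

open Matrix

/-- Euclidean norm on `Fin d → ℝ`. -/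
noncomputable def nrm {d : ℕ} (v : Fin d → ℝ) : ℝ := Real.sqrt (v ⬝ᵥ v)

lemma dot_hasDerivAt {d : ℕ} {u w : ℝ → Fin d → ℝ} {u' w' : Fin d → ℝ} {x : ℝ}
    (hu : HasDerivAt u u' x) (hw : HasDerivAt w w' x) :
    HasDerivAt (fun t => u t ⬝ᵥ w t) (u' ⬝ᵥ w x + u x ⬝ᵥ w') x := by
  simp only [dotProduct]
  rw [← Finset.sum_add_distrib]
  exact HasDerivAt.fun_sum fun i _ =>
    ((hasDerivAt_pi.mp hu i).mul (hasDerivAt_pi.mp hw i))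

lemma vecMulVec_mulVec' {d : ℕ} (u v w : Fin d → ℝ) :
    vecMulVec u v *ᵥ w = (v ⬝ᵥ w) • u := by
  funext i
  simp only [mulVec, vecMulVec_apply, dotProduct, smul_eq_mul, Pi.smul_apply,
    Finset.sum_mul]
  exact Finset.sum_congr rfl fun j _ => by ring

theorem stmt14 (B : Matrix (Fin 3) (Fin 3) ℝ) (μ0 τ0 nb : Fin 3 → ℝ)
    (hμ0 : nrm μ0 = 1) (hτ0 : nrm τ0 = 1) (hnb : nrm nb = 1)
    (hμτ : μ0 ⬝ᵥ τ0 = 0) (hnτ : nb ⬝ᵥ τ0 = 0) (hlt : |μ0 ⬝ᵥ nb| < 1)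
    (μ τ : ℝ → Fin 3 → ℝ) (hμ00 : μ 0 = μ0) (hτ00 : τ 0 = τ0)
    (hμn : ∀ t, nrm (μ t) = 1) (hτn : ∀ t, nrm (τ t) = 1)
    (hμd : HasDerivAt μ (((1 - vecMulVec τ0 τ0) * B - Bᵀ) *ᵥ μ0) 0)
    (hτd : HasDerivAt τ ((1 - vecMulVec τ0 τ0) *ᵥ (B *ᵥ τ0)) 0)
    (P : ℝ → Fin 3 → ℝ)
    (hP : ∀ t, P t = (nrm (nb - (nb ⬝ᵥ τ t) • τ t))⁻¹ • (nb - (nb ⬝ᵥ τ t) • τ t)) :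
    HasDerivAt (fun t => Real.arccos (μ t ⬝ᵥ P t))
      (-(((B - Bᵀ) *ᵥ μ0) ⬝ᵥ nb) / Real.sqrt (1 - (μ0 ⬝ᵥ nb) ^ 2)) 0 := by
  set τ' : Fin 3 → ℝ := (1 - vecMulVec τ0 τ0) *ᵥ (B *ᵥ τ0) with hτ'
  set μ' : Fin 3 → ℝ := ((1 - vecMulVec τ0 τ0) * B - Bᵀ) *ᵥ μ0 with hμ'
  have hnb2 : nb ⬝ᵥ nb = 1 := by
    have := hnb; rw [nrm, Real.sqrt_eq_one] at this; exact this
  have hτt2 : ∀ t, τ t ⬝ᵥ τ t = 1 := fun t => by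
    have := hτn t; rw [nrm, Real.sqrt_eq_one] at this; exact this
  -- scalar functions
  set a : ℝ → ℝ := fun t => nb ⬝ᵥ τ t with haa
  set m : ℝ → ℝ := fun t => μ t ⬝ᵥ nb with hmm
  set c : ℝ → ℝ := fun t => μ t ⬝ᵥ τ t with hcc
  have a0 : a 0 = 0 := by show nb ⬝ᵥ τ 0 = 0; rw [hτ00]; exact hnτ
  have m0 : m 0 = μ0 ⬝ᵥ nb := by show μ 0 ⬝ᵥ nb = _; rw [hμ00]
  have c0 : c 0 = 0 := by show μ 0 ⬝ᵥ τ 0 = 0; rw [hμ00, hτ00]; exact hμτ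
  have ha : HasDerivAt a (nb ⬝ᵥ τ') 0 := by
    have := dot_hasDerivAt (hasDerivAt_const 0 nb) hτd
    simpa only [zero_dotProduct, zero_add] using this
  have hm : HasDerivAt m (μ' ⬝ᵥ nb) 0 := by
    have := dot_hasDerivAt hμd (hasDerivAt_const 0 nb)
    simpa only [dotProduct_zero, add_zero] using this
  have hc : HasDerivAt c (μ' ⬝ᵥ τ0 + μ0 ⬝ᵥ τ') 0 := by
    have := dot_hasDerivAt hμd hτd
    simpa only [hμ00, hτ00] using this
  -- rewrite the function
  have hq : ∀ t, (nb - a t • τ t) ⬝ᵥ (nb - a t • τ t) = 1 - a t ^ 2 := by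
    intro t
    simp only [dotProduct_sub, sub_dotProduct, dotProduct_smul, smul_dotProduct,
      smul_eq_mul, hnb2, hτt2 t]
    have : τ t ⬝ᵥ nb = a t := dotProduct_comm _ _
    rw [this]
    ring
  have hf : ∀ t, μ t ⬝ᵥ P t = (Real.sqrt (1 - a t ^ 2))⁻¹ * (m t - a t * c t) := by
    intro t
    rw [hP t]
    show μ t ⬝ᵥ _ = _
    rw [dotProduct_smul]
    congr 1
    · rw [nrm, hq t]
    · simp only [dotProduct_sub, dotProduct_smul, smul_eq_mul, hmm, hcc, haa]
  have hx1 : μ0 ⬝ᵥ nb ≠ -1 := by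
    intro h; rw [h] at hlt; norm_num at hlt
  have hx2 : μ0 ⬝ᵥ nb ≠ 1 := by
    intro h; rw [h] at hlt; norm_num at hlt
  -- derivative of inner scalar function
  have hinner : HasDerivAt (fun t => 1 - a t ^ 2) 0 0 := by
    have := ((ha.pow 2).const_sub 1)
    simpa [a0] using this
  have hs : HasDerivAt (fun t => Real.sqrt (1 - a t ^ 2)) 0 0 := by
    have h1 : (1 : ℝ) - a 0 ^ 2 ≠ 0 := by rw [a0]; norm_num
    have := (Real.hasDerivAt_sqrt h1).comp 0 hinner
    simp at this; exact this
  have hsinv : HasDerivAt (fun t => (Real.sqrt (1 - a t ^ 2))⁻¹) 0 0 := by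
    have hne : Real.sqrt (1 - a 0 ^ 2) ≠ 0 := by
      rw [a0]; simp
    have := hs.inv hne
    simp at this; exact this
  have hg : HasDerivAt (fun t => m t - a t * c t) (μ' ⬝ᵥ nb) 0 := by
    have := hm.sub (ha.mul hc)
    simp [a0, c0] at this; exact this
  have hfd : HasDerivAt (fun t => μ t ⬝ᵥ P t) (μ' ⬝ᵥ nb) 0 := by
    have := hsinv.mul hg
    have h2 : (fun t => (Real.sqrt (1 - a t ^ 2))⁻¹ * (m t - a t * c t))
        = fun t => μ t ⬝ᵥ P t := by
      funext t; rw [hf t]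
    simp only [Pi.mul_def] at this
    rw [h2] at this
    simpa [a0, m0, c0] using this
  have hval : μ 0 ⬝ᵥ P 0 = μ0 ⬝ᵥ nb := by
    rw [hf 0, a0, m0, c0]; simp
  have harc : HasDerivAt Real.arccos (-(1 / Real.sqrt (1 - (μ0 ⬝ᵥ nb) ^ 2)))
      ((fun t => μ t ⬝ᵥ P t) 0) := by
    rw [show (fun t => μ t ⬝ᵥ P t) 0 = μ0 ⬝ᵥ nb from hval]
    exact Real.hasDerivAt_arccos hx1 hx2
  have harccos := harc.comp 0 hfd
  have hkey : μ' ⬝ᵥ nb = ((B - Bᵀ) *ᵥ μ0) ⬝ᵥ nb := by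
    rw [hμ']
    have : ((1 - vecMulVec τ0 τ0) * B - Bᵀ) *ᵥ μ0
        = (B - Bᵀ) *ᵥ μ0 - (τ0 ⬝ᵥ (B *ᵥ μ0)) • τ0 := by
      rw [sub_mulVec, sub_mulVec, Matrix.sub_mul, one_mul, sub_mulVec,
        ← mulVec_mulVec, vecMulVec_mulVec']
      ring_nf
    rw [this, sub_dotProduct, smul_dotProduct, smul_eq_mul]
    have : τ0 ⬝ᵥ nb = 0 := by rw [dotProduct_comm]; exact hnτ
    rw [this]
    ring
  have : -(1 / Real.sqrt (1 - (μ0 ⬝ᵥ nb) ^ 2)) * (μ' ⬝ᵥ nb)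
      = -(((B - Bᵀ) *ᵥ μ0) ⬝ᵥ nb) / Real.sqrt (1 - (μ0 ⬝ᵥ nb) ^ 2) := by
    rw [hkey]; ring
  rw [← this]
  exact harccos
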